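/- Let (V,h,J₋) be a pseudo-Hermitian vector space of dimension n ≥ 4, Ω(x,y) = h(x,J₋y) the Kähler form, and σ as in Higa's construction: σ(ψ)(x,y,z,w) := 2ψ(x,y)h(z,w) + ψ(x,z)h(y,w) - ψ(y,z)h(x,w) - ψ(x,w)h(y,z) + ψ(y,w)h(x,z). Then σ(Ω) does not satisfy the Kähler identity: there exist x,y,z,w with σ(Ω)(x,y,z,w) ≠ σ(Ω)(x,y,J₋z,J₋w). -/

import Mathlib

/-- Let `(V,h,J)` be a pseudo-Hermitian vector space of dimension
`n ≥ 4`, with Kähler form `Ω(x,y) = h(x,Jy)`, and `σ` Higa's map.  Then `σ(Ω)` does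
not satisfy the Kähler identity: there exist `x,y,z,w` with
`σ(Ω)(x,y,z,w) ≠ σ(Ω)(x,y,Jz,Jw)`. -/
theorem stmt14 (V : Type*) [AddCommGroup V] [Module ℝ V] [FiniteDimensional ℝ V]
    (hn : 4 ≤ Module.finrank ℝ V)
    (h : LinearMap.BilinForm ℝ V) (hsymm : h.IsSymm) (hnd : h.Nondegenerate)
    (J : V →ₗ[ℝ] V) (hJ2 : ∀ x, J (J x) = -x)
    (hJh : ∀ x y, h (J x) (J y) = h x y)
    (Ω : V → V → ℝ) (hΩ : ∀ x y, Ω x y = h x (J y))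
    (σΩ : V → V → V → V → ℝ)
    (hσ : ∀ x y z w, σΩ x y z w
      = 2 * Ω x y * h z w + Ω x z * h y w - Ω y z * h x w
        - Ω x w * h y z + Ω y w * h x z) :
    ∃ x y z w, σΩ x y z w ≠ σΩ x y (J z) (J w) := by
  have hsym : ∀ a b : V, h a b = h b a := fun a b => hsymm.eq a b
  -- polarization
  have pol : ∀ a b : V, h (a + b) (a + b) = h a a + 2 * h a b + h b b := by
    intro a b
    simp [map_add, LinearMap.add_apply, hsym b a]
    ring
  -- antisymmetry of x ↦ h x (J x)
  have hxJx : ∀ a : V, h a (J a) = 0 := by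
    intro a
    have h1 : h a (J a) = - h a (J a) := by
      calc h a (J a) = h (J a) (J (J a)) := (hJh a (J a)).symm
        _ = h (J a) (-a) := by rw [hJ2]
        _ = - h (J a) a := by simp
        _ = - h a (J a) := by rw [hsym]
    linarith
  -- step 1: a vector z with h z z ≠ 0
  have hexz : ∃ z : V, h z z ≠ 0 := by
    by_contra hz
    push_neg at hz
    have hall : ∀ a b : V, h a b = 0 := by
      intro a b
      have := pol a b
      rw [hz a, hz b, hz (a + b)] at this
      linarith
    have : (0 : ℕ) < Module.finrank ℝ V := by omega
    have : Nontrivial V := Module.nontrivial_of_finrank_pos (R := ℝ) this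
    obtain ⟨x, hx⟩ := exists_ne (0 : V)
    exact hx (hnd.1 x (fun n => hall x n))
  obtain ⟨z, hzz⟩ := hexz
  have hzJz : h z (J z) = 0 := hxJx z
  have hJzJz : h (J z) (J z) = h z z := hJh z z
  -- step 2: y orthogonal to z and J z with h y y ≠ 0
  have hexy : ∃ y : V, h y z = 0 ∧ h y (J z) = 0 ∧ h y y ≠ 0 := by
    by_contra hy
    push_neg at hy
    -- all vectors in W are isotropic, hence W = 0
    have hW0 : ∀ y : V, h y z = 0 → h y (J z) = 0 → y = 0 := by
      intro y h1 h2
      apply hnd.1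
      intro v
      -- decompose v
      set a : ℝ := h v z / h z z with ha
      set b : ℝ := h v (J z) / h z z with hb
      set v' : V := v - a • z - b • (J z) with hv'
      have hv'z : h v' z = 0 := by
        simp only [hv', map_sub, map_smul, LinearMap.sub_apply, LinearMap.smul_apply]
        rw [hsym (J z) z, hzJz]
        simp only [ha, smul_eq_mul, mul_zero, smul_zero, sub_zero, div_mul_cancel₀ _ hzz, sub_self]
      have hv'Jz : h v' (J z) = 0 := by
        simp only [hv', map_sub, map_smul, LinearMap.sub_apply, LinearMap.smul_apply]
        rw [hzJz, hJzJz]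
        simp only [hb, smul_eq_mul, mul_zero, smul_zero, sub_zero, div_mul_cancel₀ _ hzz, sub_self]
      -- h y v' = 0 by polarization inside W
      have hyy : h y y = 0 := hy y h1 h2
      have hv'v' : h v' v' = 0 := hy v' hv'z hv'Jz
      have hsum : h (y + v') (y + v') = 0 := by
        apply hy
        · simp [map_add, LinearMap.add_apply, h1, hv'z]
        · simp [map_add, LinearMap.add_apply, h2, hv'Jz]
      have hyv' : h y v' = 0 := by
        rw [pol y v', hyy, hv'v'] at hsum
        linarith
      have hdecomp : v = v' + a • z + b • (J z) := by
        simp [hv']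
        abel
      rw [hdecomp]
      simp [map_add, map_smul, LinearMap.add_apply, LinearMap.smul_apply, hyv',
        hsym v' y, h1, h2]
    -- then V embeds into ℝ × ℝ
    have hinj : Function.Injective ((h.flip z).prod (h.flip (J z))) := by
      rw [← LinearMap.ker_eq_bot, LinearMap.ker_eq_bot']
      intro m hm
      simp [LinearMap.prod_apply, Prod.ext_iff, LinearMap.flip_apply] at hm
      exact hW0 m hm.1 hm.2
    have := LinearMap.finrank_le_finrank_of_injective hinj
    simp [Module.finrank_self] at this
    omega
  obtain ⟨y, h1, h2, hyy⟩ := hexy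
  -- derived orthogonality facts
  have h3 : h z y = 0 := by rw [hsym]; exact h1
  have h4 : h (J z) y = 0 := by rw [hsym]; exact h2
  have h5 : h z (J y) = 0 := by
    have := hJh z (J y)
    rw [hJ2] at this
    simp at this
    rw [← this]
    simp [h4]
  have hyJy : h y (J y) = 0 := hxJx y
  refine ⟨z, y, z, J y, ?_⟩
  have lhs : σΩ z y z (J y) = - (h y y * h z z) := by
    rw [hσ]
    simp only [hΩ, hJ2, map_neg, h1, h2, h3, h5, hzJz, hyJy]
    ring
  have rhs : σΩ z y (J z) (J (J y)) = h y y * h z z := by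
    rw [hσ]
    simp only [hΩ, hJ2, map_neg, LinearMap.neg_apply, h1, h2, h3, h4, h5, hzJz, hyJy,
      hJzJz, hsym y z]
    ring
  rw [lhs, rhs]
  intro hc
  have : h y y * h z z = 0 := by linarith
  rcases mul_eq_zero.mp this with h' | h'
  · exact hyy h'
  · exact hzz h'
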